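/- Let a_k, b_k > 0 for k = 1,...,K and define for each block C of a partition the pooled estimate p_C = (\sum_{k\in C} a_k)/(\sum_{k\in C}(a_k+b_k)). If partition C'' is obtained from C by merging blocks B_1 and B_2, then the difference in maximal pseudo-likelihoods satisfies Q*(C) - Q*(C'') = n_1 KL(p_{B_1} \| p_{B_1\cup B_2}) + n_2 KL(p_{B_2} \| p_{B_1 \cup B_2}) \geq 0, where n_j = \sum_{k \in B_j}(a_k+b_k) and KL is the Bernoulli KL divergence. -/

import Mathlib

def Theta {K : ℕ} (C : Finpartition (Finset.univ : Finset (Fin K))) : Set (Fin K → ℝ) :=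
  {β | (∀ k, β k ∈ Set.Ioo (0:ℝ) 1) ∧
    ∀ t ∈ C.parts, ∀ g ∈ t, ∀ h ∈ t, β g = β h}

noncomputable def Qstar {K : ℕ} (a b : Fin K → ℝ)
    (C : Finpartition (Finset.univ : Finset (Fin K))) : ℝ :=
  sSup ((fun β => ∑ k, (a k * Real.log (β k) + b k * Real.log (1 - β k))) '' Theta C)

noncomputable def pooled {K : ℕ} (a b : Fin K → ℝ) (t : Finset (Fin K)) : ℝ :=
  (∑ k ∈ t, a k) / (∑ k ∈ t, (a k + b k))

noncomputable def klBer (x y : ℝ) : ℝ :=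
  x * Real.log (x / y) + (1 - x) * Real.log ((1 - x) / (1 - y))

lemma klBer_nonneg {x y : ℝ} (hx : x ∈ Set.Ioo (0:ℝ) 1) (hy : y ∈ Set.Ioo (0:ℝ) 1) :
    0 ≤ klBer x y := by
  obtain ⟨hx0, hx1⟩ := hx; obtain ⟨hy0, hy1⟩ := hy
  have h1 : Real.log (y / x) ≤ y / x - 1 :=
    Real.log_le_sub_one_of_pos (by positivity)
  have h2 : Real.log ((1 - y) / (1 - x)) ≤ (1 - y) / (1 - x) - 1 :=
    Real.log_le_sub_one_of_pos (div_pos (by linarith) (by linarith))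
  have e1 : Real.log (x / y) = - Real.log (y / x) := by
    rw [← Real.log_inv]; congr 1; field_simp
  have e2 : Real.log ((1 - x) / (1 - y)) = - Real.log ((1 - y) / (1 - x)) := by
    rw [← Real.log_inv]; congr 1; field_simp
  have key : x * Real.log (y / x) + (1 - x) * Real.log ((1 - y) / (1 - x)) ≤ 0 := by
    have hx1' : (0:ℝ) < 1 - x := by linarith
    calc x * Real.log (y / x) + (1 - x) * Real.log ((1 - y) / (1 - x))
        ≤ x * (y / x - 1) + (1 - x) * ((1 - y) / (1 - x) - 1) := by
          gcongr
      _ = 0 := by field_simp; ring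
  unfold klBer; rw [e1, e2]; nlinarith

lemma pooled_mem_Ioo {K : ℕ} {a b : Fin K → ℝ} (ha : ∀ k, 0 < a k) (hb : ∀ k, 0 < b k)
    {t : Finset (Fin K)} (ht : t.Nonempty) : pooled a b t ∈ Set.Ioo (0:ℝ) 1 := by
  have hA : 0 < ∑ k ∈ t, a k := Finset.sum_pos (fun k _ => ha k) ht
  have hB : 0 < ∑ k ∈ t, b k := Finset.sum_pos (fun k _ => hb k) ht
  have hAB : (∑ k ∈ t, (a k + b k)) = (∑ k ∈ t, a k) + (∑ k ∈ t, b k) :=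
    Finset.sum_add_distrib
  constructor
  · unfold pooled; rw [hAB]; positivity
  · unfold pooled; rw [hAB, div_lt_one (by linarith)]; linarith

lemma kl_expand {A B p : ℝ} (hA : 0 < A) (hB : 0 < B) (hp : p ∈ Set.Ioo (0:ℝ) 1) :
    (A + B) * klBer (A/(A+B)) p =
      (A * Real.log (A/(A+B)) + B * Real.log (1 - A/(A+B)))
        - (A * Real.log p + B * Real.log (1-p)) := by
  set q := A/(A+B) with hq_def
  have hq : q ∈ Set.Ioo (0:ℝ) 1 := by
    constructor
    · positivity
    · rw [hq_def, div_lt_one (by linarith)]; linarith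
  have h1 : (A+B)*q = A := by rw [hq_def]; field_simp
  have h2 : (A+B)*(1-q) = B := by rw [hq_def]; field_simp; ring
  unfold klBer
  rw [Real.log_div hq.1.ne' hp.1.ne',
    Real.log_div (by linarith [hq.2] : (1:ℝ) - q ≠ 0) (by linarith [hp.2] : (1:ℝ) - p ≠ 0)]
  linear_combination (Real.log q - Real.log p) * h1 + (Real.log (1-q) - Real.log (1-p)) * h2

lemma block_le {A B p : ℝ} (hA : 0 < A) (hB : 0 < B) (hp : p ∈ Set.Ioo (0:ℝ) 1) :
    A * Real.log p + B * Real.log (1-p) ≤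
      A * Real.log (A/(A+B)) + B * Real.log (1 - A/(A+B)) := by
  have hq : A/(A+B) ∈ Set.Ioo (0:ℝ) 1 := by
    constructor
    · positivity
    · rw [div_lt_one (by linarith)]; linarith
  have := kl_expand hA hB hp
  nlinarith [klBer_nonneg hq hp, mul_nonneg (by linarith : (0:ℝ) ≤ A + B) (klBer_nonneg hq hp)]

noncomputable def F {K : ℕ} (a b : Fin K → ℝ)
    (C : Finpartition (Finset.univ : Finset (Fin K))) : ℝ :=
  ∑ t ∈ C.parts, ((∑ k ∈ t, a k) * Real.log (pooled a b t)
    + (∑ k ∈ t, b k) * Real.log (1 - pooled a b t))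

lemma Qstar_eq {K : ℕ} (a b : Fin K → ℝ) (ha : ∀ k, 0 < a k) (hb : ∀ k, 0 < b k)
    (C : Finpartition (Finset.univ : Finset (Fin K))) : Qstar a b C = F a b C := by
  classical
  set Q : (Fin K → ℝ) → ℝ :=
    fun β => ∑ k, (a k * Real.log (β k) + b k * Real.log (1 - β k)) with hQ
  have hsum : ∀ β : Fin K → ℝ, Q β = ∑ t ∈ C.parts, ∑ k ∈ t,
      (a k * Real.log (β k) + b k * Real.log (1 - β k)) := by
    intro β
    rw [hQ]
    simp only
    have h := Finset.sum_biUnion (s := C.parts) (t := id)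
      (f := fun k => a k * Real.log (β k) + b k * Real.log (1 - β k))
      C.supIndep.pairwiseDisjoint
    rw [C.biUnion_parts] at h
    simpa using h
  -- upper bound
  have hub : ∀ β ∈ Theta C, Q β ≤ F a b C := by
    intro β hβ
    rw [hsum]
    apply Finset.sum_le_sum
    intro t ht
    obtain ⟨g, hg⟩ := C.nonempty_of_mem_parts ht
    have hconst : ∀ k ∈ t, β k = β g := fun k hk => hβ.2 t ht k hk g hg
    have hrw : ∑ k ∈ t, (a k * Real.log (β k) + b k * Real.log (1 - β k)) =
        (∑ k ∈ t, a k) * Real.log (β g) + (∑ k ∈ t, b k) * Real.log (1 - β g) := by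
      rw [Finset.sum_add_distrib, Finset.sum_mul, Finset.sum_mul]
      congr 1
      · exact Finset.sum_congr rfl fun k hk => by rw [hconst k hk]
      · exact Finset.sum_congr rfl fun k hk => by rw [hconst k hk]
    rw [hrw]
    have hA : 0 < ∑ k ∈ t, a k := Finset.sum_pos (fun k _ => ha k) ⟨g, hg⟩
    have hB : 0 < ∑ k ∈ t, b k := Finset.sum_pos (fun k _ => hb k) ⟨g, hg⟩
    have := block_le hA hB (hβ.1 g)
    have hpooled : pooled a b t = (∑ k ∈ t, a k) / ((∑ k ∈ t, a k) + (∑ k ∈ t, b k)) := by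
      unfold pooled; rw [Finset.sum_add_distrib]
    rw [hpooled]
    exact this
  -- attained
  set β₀ : Fin K → ℝ := fun k => pooled a b (C.part k) with hβ₀
  have hβ₀mem : β₀ ∈ Theta C := by
    constructor
    · intro k
      exact pooled_mem_Ioo ha hb
        (C.nonempty_of_mem_parts (C.part_mem.mpr (Finset.mem_univ k)))
    · intro t ht g hg h hh
      simp only [hβ₀]
      rw [C.part_eq_of_mem ht hg, C.part_eq_of_mem ht hh]
  have hQβ₀ : Q β₀ = F a b C := by
    rw [hsum]
    apply Finset.sum_congr rfl
    intro t ht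
    have : ∀ k ∈ t, β₀ k = pooled a b t := by
      intro k hk; simp only [hβ₀]; rw [C.part_eq_of_mem ht hk]
    rw [Finset.sum_congr rfl (fun k hk => by rw [this k hk]),
      Finset.sum_add_distrib, ← Finset.sum_mul, ← Finset.sum_mul]
  have hne : (Q '' Theta C).Nonempty := ⟨Q β₀, Set.mem_image_of_mem _ hβ₀mem⟩
  have hbdd : ∀ x ∈ Q '' Theta C, x ≤ F a b C := by
    rintro x ⟨β, hβ, rfl⟩; exact hub β hβ
  refine le_antisymm (csSup_le hne hbdd) ?_
  rw [← hQβ₀]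
  exact le_csSup ⟨F a b C, hbdd⟩ (Set.mem_image_of_mem _ hβ₀mem)

theorem stmt18 {K : ℕ} (a b : Fin K → ℝ) (ha : ∀ k, 0 < a k) (hb : ∀ k, 0 < b k)
    (C C'' : Finpartition (Finset.univ : Finset (Fin K)))
    (B1 B2 : Finset (Fin K)) (hB1 : B1 ∈ C.parts) (hB2 : B2 ∈ C.parts) (hne : B1 ≠ B2)
    (hmerge : C''.parts = insert (B1 ∪ B2) ((C.parts.erase B1).erase B2)) :
    Qstar a b C - Qstar a b C'' =
      (∑ k ∈ B1, (a k + b k)) * klBer (pooled a b B1) (pooled a b (B1 ∪ B2)) +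
      (∑ k ∈ B2, (a k + b k)) * klBer (pooled a b B2) (pooled a b (B1 ∪ B2)) ∧
    0 ≤ Qstar a b C - Qstar a b C'' := by
  classical
  set f : Finset (Fin K) → ℝ := fun t =>
    (∑ k ∈ t, a k) * Real.log (pooled a b t)
      + (∑ k ∈ t, b k) * Real.log (1 - pooled a b t) with hf
  have hn1 : B1.Nonempty := C.nonempty_of_mem_parts hB1
  have hn2 : B2.Nonempty := C.nonempty_of_mem_parts hB2
  have hd : Disjoint B1 B2 := C.supIndep.pairwiseDisjoint hB1 hB2 hne
  have hB2' : B2 ∈ C.parts.erase B1 := Finset.mem_erase.mpr ⟨hne.symm, hB2⟩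
  have hnot : B1 ∪ B2 ∉ (C.parts.erase B1).erase B2 := by
    intro h
    have h1 : B1 ∪ B2 ∈ C.parts.erase B1 := Finset.mem_erase.mp h |>.2
    have h2 : B1 ∪ B2 ∈ C.parts := Finset.mem_erase.mp h1 |>.2
    have h3 : B1 ∪ B2 ≠ B1 := Finset.mem_erase.mp h1 |>.1
    obtain ⟨x, hx⟩ := hn1
    exact h3 (C.eq_of_mem_parts h2 hB1 (Finset.mem_union_left _ hx) hx)
  have e1 : F a b C = f B1 + ∑ t ∈ C.parts.erase B1, f t :=
    (Finset.add_sum_erase _ f hB1).symm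
  have e2 : ∑ t ∈ C.parts.erase B1, f t
      = f B2 + ∑ t ∈ (C.parts.erase B1).erase B2, f t :=
    (Finset.add_sum_erase _ f hB2').symm
  have e3 : F a b C'' = f (B1 ∪ B2) + ∑ t ∈ (C.parts.erase B1).erase B2, f t := by
    rw [F, hmerge, Finset.sum_insert hnot]
  have hdiff : Qstar a b C - Qstar a b C'' = f B1 + f B2 - f (B1 ∪ B2) := by
    rw [Qstar_eq a b ha hb C, Qstar_eq a b ha hb C'', e1, e2, e3]; ring
  set A1 := ∑ k ∈ B1, a k with hA1d
  set b1 := ∑ k ∈ B1, b k with hb1d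
  set A2 := ∑ k ∈ B2, a k with hA2d
  set b2 := ∑ k ∈ B2, b k with hb2d
  have hA1 : 0 < A1 := Finset.sum_pos (fun k _ => ha k) hn1
  have hb1 : 0 < b1 := Finset.sum_pos (fun k _ => hb k) hn1
  have hA2 : 0 < A2 := Finset.sum_pos (fun k _ => ha k) hn2
  have hb2 : 0 < b2 := Finset.sum_pos (fun k _ => hb k) hn2
  have hp : pooled a b (B1 ∪ B2) ∈ Set.Ioo (0:ℝ) 1 :=
    pooled_mem_Ioo ha hb (hn1.mono Finset.subset_union_left)
  have hp1 : pooled a b B1 = A1 / (A1 + b1) := by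
    unfold pooled; rw [Finset.sum_add_distrib]
  have hp2 : pooled a b B2 = A2 / (A2 + b2) := by
    unfold pooled; rw [Finset.sum_add_distrib]
  have hs1 : ∑ k ∈ B1, (a k + b k) = A1 + b1 := Finset.sum_add_distrib
  have hs2 : ∑ k ∈ B2, (a k + b k) = A2 + b2 := Finset.sum_add_distrib
  have hUa : ∑ k ∈ B1 ∪ B2, a k = A1 + A2 := Finset.sum_union hd
  have hUb : ∑ k ∈ B1 ∪ B2, b k = b1 + b2 := Finset.sum_union hd
  have kl1 := kl_expand hA1 hb1 hp
  have kl2 := kl_expand hA2 hb2 hp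
  have hfU : f (B1 ∪ B2) = (A1 + A2) * Real.log (pooled a b (B1 ∪ B2))
      + (b1 + b2) * Real.log (1 - pooled a b (B1 ∪ B2)) := by
    rw [hf]; simp only; rw [hUa, hUb]
  have key : Qstar a b C - Qstar a b C'' =
      (∑ k ∈ B1, (a k + b k)) * klBer (pooled a b B1) (pooled a b (B1 ∪ B2)) +
      (∑ k ∈ B2, (a k + b k)) * klBer (pooled a b B2) (pooled a b (B1 ∪ B2)) := by
    rw [hdiff, hfU, hs1, hs2, hp1, hp2, hf]
    simp only
    rw [hp1, hp2]
    linarith [kl1, kl2]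
  refine ⟨key, ?_⟩
  rw [key]
  have hq1 : pooled a b B1 ∈ Set.Ioo (0:ℝ) 1 := pooled_mem_Ioo ha hb hn1
  have hq2 : pooled a b B2 ∈ Set.Ioo (0:ℝ) 1 := pooled_mem_Ioo ha hb hn2
  have := klBer_nonneg hq1 hp
  have := klBer_nonneg hq2 hp
  have h1 : (0:ℝ) ≤ ∑ k ∈ B1, (a k + b k) := by rw [hs1]; linarith
  have h2 : (0:ℝ) ≤ ∑ k ∈ B2, (a k + b k) := by rw [hs2]; linarith
  positivity
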